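/- arXiv:1804.03644 — 3 statements merged into one kernel-verified Lean document; each statement's English description precedes it below -/
import Mathlib

section
/- For every real α > −1/2 and every λ ∈ ℝ: ∫₀^∞ t^{α−1/2} e^{−(t+λ)²/2} dt = (√π·Γ(1/2+α)/(2^{α/2+1/4}·Γ(3/4+α/2))) · ₁F₁(−α/2+1/4; 1/2; −λ²/2) − (√π·Γ(1/2+α)/(2^{α/2−1/4}·Γ(1/4+α/2))) · λ · ₁F₁(−α/2+3/4; 3/2; −λ²/2). -/
noncomputable section

open MeasureTheory Real Set

/-- The rising factorial `(x)_k = x (x+1) ⋯ (x+k−1)`. -/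
def risingFac (x : ℝ) : ℕ → ℝ
  | 0 => 1
  | k + 1 => risingFac x k * (x + k)

/-- The confluent hypergeometric function `₁F₁(α;β;z) = Σ_k (α)_k/((β)_k k!) z^k`. -/
def oneF1 (α β z : ℝ) : ℝ :=
  ∑' k : ℕ, risingFac α k / (risingFac β k * (Nat.factorial k)) * z ^ k

lemma risingFac_zero (x : ℝ) : risingFac x 0 = 1 := rfl

lemma risingFac_succ (x : ℝ) (k : ℕ) : risingFac x (k + 1) = risingFac x k * (x + k) := rfl

lemma risingFac_succ' (x : ℝ) (k : ℕ) : risingFac x (k + 1) = x * risingFac (x + 1) k := by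
  induction k with
  | zero => simp [risingFac]
  | succ n ih =>
      rw [risingFac_succ, ih, risingFac_succ]
      push_cast
      ring

lemma risingFac_pos {x : ℝ} (hx : 0 < x) (k : ℕ) : 0 < risingFac x k := by
  induction k with
  | zero => simp [risingFac]
  | succ n ih => exact mul_pos ih (by positivity)

lemma risingFac_add (x : ℝ) (j m : ℕ) :
    risingFac x (j + m) = risingFac x j * risingFac (x + j) m := by
  induction m with
  | zero => simp [risingFac]
  | succ n ih =>
      rw [← Nat.add_assoc, risingFac_succ, ih, risingFac_succ]
      push_cast
      ring

lemma Gamma_risingFac {x : ℝ} (hx : 0 < x) (k : ℕ) :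
    Real.Gamma (x + k) = Real.Gamma x * risingFac x k := by
  induction k with
  | zero => simp [risingFac]
  | succ n ih =>
      have : x + (n + 1 : ℕ) = (x + n) + 1 := by push_cast; ring
      rw [this, Real.Gamma_add_one (by positivity), ih, risingFac_succ]
      ring

lemma risingFac_half (p : ℕ) :
    risingFac (1 / 2) p * (p.factorial * 4 ^ p) = (2 * p).factorial := by
  induction p with
  | zero => simp [risingFac]
  | succ n ih =>
      have h2 : 2 * (n + 1) = (2 * n + 1) + 1 := by ring
      rw [risingFac_succ, h2, Nat.factorial_succ, Nat.factorial_succ, Nat.factorial_succ]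
      push_cast
      linear_combination (4 * ((1:ℝ)/2 + n) * (n + 1)) * ih

lemma risingFac_three_half (p : ℕ) :
    risingFac (3 / 2) p * (p.factorial * 4 ^ p) = (2 * p + 1).factorial := by
  induction p with
  | zero => simp [risingFac]
  | succ n ih =>
      have h2 : 2 * (n + 1) + 1 = (2 * n + 2) + 1 := by ring
      rw [risingFac_succ, h2, Nat.factorial_succ, Nat.factorial_succ, Nat.factorial_succ]
      push_cast
      linear_combination (4 * ((3:ℝ)/2 + n) * (n + 1)) * ih

lemma key_identity (a : ℝ) (p : ℕ) : ∀ b : ℝ,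
    ∑ j ∈ Finset.range (p + 1),
      (p.choose j : ℝ) * (-1) ^ j * risingFac a j * risingFac (b + j) (p - j)
      = risingFac (b - a) p := by
  induction p with
  | zero => intro b; simp [risingFac]
  | succ p ih =>
      intro b
      have peel : ∀ f : ℕ → ℝ, ∑ j ∈ Finset.range (p + 2), f j
          = f 0 + ∑ i ∈ Finset.range (p + 1), f (i + 1) := by
        intro f; rw [Finset.sum_range_succ' f (p + 1)]; ring
      rw [peel]
      have hch : ∀ i, ((p + 1).choose (i + 1) : ℝ) = (p.choose i : ℝ) + (p.choose (i + 1) : ℝ) := by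
        intro i; rw [Nat.choose_succ_succ]; push_cast; ring
      have split : ∑ i ∈ Finset.range (p + 1),
            ((p + 1).choose (i + 1) : ℝ) * (-1) ^ (i + 1) * risingFac a (i + 1) *
              risingFac (b + (i + 1 : ℕ)) (p + 1 - (i + 1))
          = (∑ i ∈ Finset.range (p + 1),
              (p.choose (i + 1) : ℝ) * (-1) ^ (i + 1) * risingFac a (i + 1) *
                risingFac (b + (i + 1 : ℕ)) (p - i))
            + ∑ i ∈ Finset.range (p + 1),
              (p.choose i : ℝ) * (-1) ^ (i + 1) * risingFac a (i + 1) *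
                risingFac (b + (i + 1 : ℕ)) (p - i) := by
        rw [← Finset.sum_add_distrib]
        refine Finset.sum_congr rfl fun i hi => ?_
        rw [hch i]
        have : p + 1 - (i + 1) = p - i := by omega
        rw [this]; ring
      rw [split]
      -- define the three pieces
      have hf0 : ((p + 1).choose 0 : ℝ) * (-1) ^ 0 * risingFac a 0 *
          risingFac (b + (0 : ℕ)) (p + 1 - 0) = risingFac b (p + 1) := by
        simp [risingFac_zero]
      have hA : risingFac b (p + 1)
            + ∑ i ∈ Finset.range (p + 1),
              (p.choose (i + 1) : ℝ) * (-1) ^ (i + 1) * risingFac a (i + 1) *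
                risingFac (b + (i + 1 : ℕ)) (p - i)
          = ∑ j ∈ Finset.range (p + 1),
              (p.choose j : ℝ) * (-1) ^ j * risingFac a j *
                ((b + j) * risingFac (b + 1 + j) (p - j)) := by
        have expand : ∀ j ∈ Finset.range (p + 1),
            (p.choose j : ℝ) * (-1) ^ j * risingFac a j *
                ((b + j) * risingFac (b + 1 + j) (p - j))
            = (p.choose j : ℝ) * (-1) ^ j * risingFac a j *
                risingFac (b + j) (p + 1 - j) := by
          intro j hj
          have hj' : j ≤ p := Nat.lt_succ_iff.mp (Finset.mem_range.mp hj)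
          have h1 : p + 1 - j = (p - j) + 1 := by omega
          rw [h1, risingFac_succ']
          ring_nf
        rw [Finset.sum_congr rfl expand]
        have peel2 : ∑ j ∈ Finset.range (p + 2),
              (p.choose j : ℝ) * (-1) ^ j * risingFac a j * risingFac (b + j) (p + 1 - j)
            = ((p.choose 0 : ℝ) * (-1) ^ 0 * risingFac a 0 * risingFac (b + (0:ℕ)) (p + 1 - 0))
              + ∑ i ∈ Finset.range (p + 1),
                (p.choose (i + 1) : ℝ) * (-1) ^ (i + 1) * risingFac a (i + 1) *
                  risingFac (b + (i + 1 : ℕ)) (p + 1 - (i + 1)) := by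
          rw [Finset.sum_range_succ' (fun j =>
            (p.choose j : ℝ) * (-1) ^ j * risingFac a j * risingFac (b + j) (p + 1 - j)) (p + 1)]
          ring
        have last0 : ∑ j ∈ Finset.range (p + 2),
              (p.choose j : ℝ) * (-1) ^ j * risingFac a j * risingFac (b + j) (p + 1 - j)
            = ∑ j ∈ Finset.range (p + 1),
              (p.choose j : ℝ) * (-1) ^ j * risingFac a j * risingFac (b + j) (p + 1 - j) := by
          rw [Finset.sum_range_succ]
          simp [Nat.choose_succ_self]
        rw [← last0, peel2]
        simp only [Nat.choose_zero_right, pow_zero, risingFac_zero, Nat.cast_zero, add_zero,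
          Nat.cast_one, one_mul, mul_one, Nat.cast_ofNat]
        congr 1
        refine Finset.sum_congr rfl fun i hi => ?_
        have : p + 1 - (i + 1) = p - i := by omega
        rw [this]
      rw [hf0, ← add_assoc, hA, ← Finset.sum_add_distrib]
      have merge : ∀ j ∈ Finset.range (p + 1),
          ((p.choose j : ℝ) * (-1) ^ j * risingFac a j *
              ((b + j) * risingFac (b + 1 + j) (p - j))
            + (p.choose j : ℝ) * (-1) ^ (j + 1) * risingFac a (j + 1) *
              risingFac (b + (j + 1 : ℕ)) (p - j))
          = (b - a) * ((p.choose j : ℝ) * (-1) ^ j * risingFac a j *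
              risingFac ((b + 1) + j) (p - j)) := by
        intro j hj
        have hc : b + ((j + 1 : ℕ) : ℝ) = b + 1 + (j : ℕ) := by push_cast; ring
        rw [hc, risingFac_succ]
        ring
      rw [Finset.sum_congr rfl merge, ← Finset.mul_sum, ih (b + 1), risingFac_succ']
      have : b + 1 - a = b - a + 1 := by ring
      rw [this]

lemma summable_abs_F1 {b : ℝ} (hb : 0 < b) (a x : ℝ) :
    Summable (fun k : ℕ =>
      |risingFac a k / (risingFac b k * (Nat.factorial k : ℝ)) * x ^ k|) := by
  set u : ℕ → ℝ := fun k => risingFac a k / (risingFac b k * (Nat.factorial k : ℝ)) * x ^ k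
    with hu
  have hrec : ∀ k : ℕ, u (k + 1) = ((a + k) * x / ((b + k) * (k + 1))) * u k := by
    intro k
    have h1 : risingFac b k ≠ 0 := (risingFac_pos hb k).ne'
    have h2 : (k.factorial : ℝ) ≠ 0 := by
      exact_mod_cast k.factorial_ne_zero
    have h3 : b + (k : ℝ) ≠ 0 := by positivity
    have h4 : ((k : ℝ) + 1) ≠ 0 := by positivity
    simp only [hu, risingFac_succ, Nat.factorial_succ]
    push_cast
    field_simp
    ring
  apply summable_of_ratio_norm_eventually_le (r := 1 / 2) (by norm_num)
  have hN : ∀ᶠ k : ℕ in Filter.atTop, (|a| ≤ (k : ℝ) ∧ 4 * |x| ≤ (k : ℝ)) ∧ 1 ≤ (k : ℝ) := by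
    have e1 : ∀ᶠ k : ℕ in Filter.atTop, |a| ≤ (k : ℝ) := by
      filter_upwards [Filter.eventually_ge_atTop ⌈|a|⌉₊] with k hk
      calc |a| ≤ (⌈|a|⌉₊ : ℝ) := Nat.le_ceil _
        _ ≤ k := by exact_mod_cast hk
    have e2 : ∀ᶠ k : ℕ in Filter.atTop, 4 * |x| ≤ (k : ℝ) := by
      filter_upwards [Filter.eventually_ge_atTop ⌈4 * |x|⌉₊] with k hk
      calc 4 * |x| ≤ (⌈4 * |x|⌉₊ : ℝ) := Nat.le_ceil _
        _ ≤ k := by exact_mod_cast hk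
    have e3 : ∀ᶠ k : ℕ in Filter.atTop, 1 ≤ (k : ℝ) := by
      filter_upwards [Filter.eventually_ge_atTop 1] with k hk
      exact_mod_cast hk
    exact (e1.and e2).and e3
  filter_upwards [hN] with k hk
  obtain ⟨⟨hk1, hk2⟩, hk3⟩ := hk
  have hden : (0 : ℝ) < (b + k) * (k + 1) := by positivity
  have hq : |(a + k) * x / ((b + k) * (k + 1))| ≤ 1 / 2 := by
    rw [abs_div, abs_of_pos hden, div_le_iff₀ hden, abs_mul]
    have hax : |a + (k : ℝ)| ≤ |a| + k := by
      simpa using abs_add_le a (k : ℝ)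
    have hxnn : (0 : ℝ) ≤ |x| := abs_nonneg x
    nlinarith [abs_nonneg (a + (k : ℝ))]
  show ‖|u (k + 1)|‖ ≤ 1 / 2 * ‖|u k|‖
  simp only [Real.norm_eq_abs, abs_abs]
  rw [hrec k, abs_mul]
  exact mul_le_mul_of_nonneg_right hq (abs_nonneg _)

lemma summable_F1 {b : ℝ} (hb : 0 < b) (a x : ℝ) :
    Summable (fun k : ℕ =>
      risingFac a k / (risingFac b k * (Nat.factorial k : ℝ)) * x ^ k) :=
  (summable_abs_F1 hb a x).of_abs

lemma kummer {b : ℝ} (hb : 0 < b) (a x : ℝ) :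
    Real.exp (-x) * oneF1 a b x = oneF1 (b - a) b (-x) := by
  have hexp : Real.exp (-x) = ∑' n : ℕ, (-x) ^ n / (n.factorial : ℝ) := by
    rw [Real.exp_eq_exp_ℝ, NormedSpace.exp_eq_tsum_div]
  have hs1 : Summable fun n : ℕ => ‖(-x) ^ n / (n.factorial : ℝ)‖ := by
    have := Real.summable_pow_div_factorial |x|
    refine this.congr fun n => ?_
    rw [norm_div, norm_pow, norm_neg, Real.norm_eq_abs, Real.norm_eq_abs,
      Nat.abs_cast]
  have hs2 : Summable fun k : ℕ =>
      ‖risingFac a k / (risingFac b k * (Nat.factorial k : ℝ)) * x ^ k‖ := by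
    simpa only [Real.norm_eq_abs] using summable_abs_F1 hb a x
  rw [oneF1, oneF1, hexp, tsum_mul_tsum_eq_tsum_sum_range_of_summable_norm hs1 hs2]
  refine tsum_congr fun n => ?_
  rw [← Finset.sum_range_reflect]
  simp only [Nat.add_sub_cancel]
  have hterm : ∀ j ∈ Finset.range (n + 1),
      (-x) ^ (n - j) / ((n - j).factorial : ℝ) *
        (risingFac a (n - (n - j)) /
          (risingFac b (n - (n - j)) * ((n - (n - j)).factorial : ℝ)) * x ^ (n - (n - j)))
      = ((n.choose j : ℝ) * (-1) ^ j * risingFac a j * risingFac (b + j) (n - j)) *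
          ((-1) ^ n * x ^ n / (risingFac b n * (n.factorial : ℝ))) := by
    intro j hj
    have hjn : j ≤ n := Nat.lt_succ_iff.mp (Finset.mem_range.mp hj)
    have hnn : n - (n - j) = j := by omega
    rw [hnn]
    have h1 : risingFac b n = risingFac b j * risingFac (b + j) (n - j) := by
      conv_lhs => rw [show n = j + (n - j) by omega, risingFac_add]
    have h2 : (n.choose j : ℝ) * ((j.factorial : ℝ) * ((n - j).factorial : ℝ))
        = (n.factorial : ℝ) := by
      exact_mod_cast congrArg (Nat.cast (R := ℝ))
        (by rw [← Nat.choose_mul_factorial_mul_factorial hjn]; ring)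
    have h3 : (-x) ^ (n - j) = ((-1 : ℝ)) ^ n * (-1) ^ j * x ^ (n - j) := by
      rw [neg_pow]
      congr 1
      rw [← pow_add, show n + j = (n - j) + 2 * j by omega, pow_add, pow_mul]
      simp
    have h4 : x ^ n = x ^ (n - j) * x ^ j := by
      rw [← pow_add]
      congr 1
      omega
    have hbj : risingFac b j ≠ 0 := (risingFac_pos hb j).ne'
    have hbjn : risingFac (b + j) (n - j) ≠ 0 :=
      (risingFac_pos (by positivity) (n - j)).ne'
    have hfj : (j.factorial : ℝ) ≠ 0 := by exact_mod_cast j.factorial_ne_zero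
    have hfnj : ((n - j).factorial : ℝ) ≠ 0 := by exact_mod_cast (n - j).factorial_ne_zero
    have hch : (n.choose j : ℝ) ≠ 0 := by
      exact_mod_cast (Nat.choose_pos hjn).ne'
    rw [h1, h3, h4, ← h2]
    field_simp
  rw [Finset.sum_congr rfl hterm, ← Finset.sum_mul, key_identity a n b]
  rw [neg_pow]
  ring

lemma G_int {s : ℝ} (hs : -1 < s) :
    IntegrableOn (fun t : ℝ => t ^ s * Real.exp (-t ^ 2 / 2)) (Ioi 0) := by
  have h := integrableOn_rpow_mul_exp_neg_mul_sq (b := 1/2) (by norm_num) hs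
  refine h.congr_fun (fun t _ => ?_) measurableSet_Ioi
  dsimp only
  rw [show -(1/2 : ℝ) * t ^ 2 = -t ^ 2 / 2 by ring]

lemma G_val {s : ℝ} (hs : -1 < s) :
    ∫ t in Ioi (0:ℝ), t ^ s * Real.exp (-t ^ 2 / 2)
      = 2 ^ ((s - 1) / 2) * Real.Gamma ((s + 1) / 2) := by
  have h := integral_rpow_mul_exp_neg_mul_rpow (p := 2) (q := s) (b := 1/2)
    (by norm_num) hs (by norm_num)
  have heq : ∫ t in Ioi (0:ℝ), t ^ s * Real.exp (-t ^ 2 / 2)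
      = ∫ x in Ioi (0:ℝ), x ^ s * Real.exp (-(1/2) * x ^ (2:ℝ)) := by
    refine setIntegral_congr_fun measurableSet_Ioi (fun t _ => ?_)
    rw [← Real.rpow_two]
    norm_num
    left
    ring_nf
  rw [heq, h]
  rw [show ((1:ℝ)/2) = 2⁻¹ by norm_num, Real.inv_rpow (by norm_num), ← Real.rpow_neg (by norm_num)]
  rw [show ((2:ℝ)⁻¹ : ℝ) = (2:ℝ) ^ (-1 : ℝ) by rw [Real.rpow_neg_one],
    ← Real.rpow_add (by norm_num)]
  congr 1
  ring_nf

lemma term_even {ν : ℝ} (hν : -1 < ν) (μ : ℝ) (p : ℕ) :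
    μ ^ (2 * p) / (((2 * p).factorial : ℝ)) *
        (2 ^ ((ν + (2 * p : ℕ) - 1) / 2) * Real.Gamma ((ν + (2 * p : ℕ) + 1) / 2))
      = (2 ^ ((ν - 1) / 2) * Real.Gamma ((ν + 1) / 2)) *
        (risingFac ((ν + 1) / 2) p / (risingFac (1 / 2) p * (p.factorial : ℝ)) *
          (μ ^ 2 / 2) ^ p) := by
  have hc : (0:ℝ) < (ν + 1) / 2 := by linarith
  have hG : Real.Gamma ((ν + (2 * p : ℕ) + 1) / 2)
      = Real.Gamma ((ν + 1) / 2) * risingFac ((ν + 1) / 2) p := by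
    rw [← Gamma_risingFac hc p]
    congr 1
    push_cast
    ring
  have h2 : (2 : ℝ) ^ ((ν + (2 * p : ℕ) - 1) / 2) = 2 ^ ((ν - 1) / 2) * 2 ^ p := by
    rw [show ((ν + (2 * p : ℕ) - 1) / 2) = (ν - 1) / 2 + (p : ℕ) by push_cast; ring,
      Real.rpow_add (by norm_num), Real.rpow_natCast]
  have hfac : ((2 * p).factorial : ℝ) = risingFac (1 / 2) p * (p.factorial : ℝ) * 4 ^ p := by
    rw [← risingFac_half p]; push_cast; ring
  have hr : risingFac (1 / 2) p ≠ 0 := (risingFac_pos (by norm_num) p).ne'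
  have hpf : (p.factorial : ℝ) ≠ 0 := by exact_mod_cast p.factorial_ne_zero
  rw [hG, h2, hfac, div_pow, pow_mul, show (4:ℝ) = 2 * 2 by norm_num, mul_pow]
  field_simp

lemma term_odd {ν : ℝ} (hν : -1 < ν) (μ : ℝ) (p : ℕ) :
    μ ^ (2 * p + 1) / (((2 * p + 1).factorial : ℝ)) *
        (2 ^ ((ν + (2 * p + 1 : ℕ) - 1) / 2) * Real.Gamma ((ν + (2 * p + 1 : ℕ) + 1) / 2))
      = μ * (2 ^ (ν / 2) * Real.Gamma ((ν + 2) / 2)) *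
        (risingFac ((ν + 2) / 2) p / (risingFac (3 / 2) p * (p.factorial : ℝ)) *
          (μ ^ 2 / 2) ^ p) := by
  have hc : (0:ℝ) < (ν + 2) / 2 := by linarith
  have hG : Real.Gamma ((ν + (2 * p + 1 : ℕ) + 1) / 2)
      = Real.Gamma ((ν + 2) / 2) * risingFac ((ν + 2) / 2) p := by
    rw [← Gamma_risingFac hc p]
    congr 1
    push_cast
    ring
  have h2 : (2 : ℝ) ^ ((ν + (2 * p + 1 : ℕ) - 1) / 2) = 2 ^ (ν / 2) * 2 ^ p := by
    rw [show ((ν + (2 * p + 1 : ℕ) - 1) / 2) = ν / 2 + (p : ℕ) by push_cast; ring,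
      Real.rpow_add (by norm_num), Real.rpow_natCast]
  have hfac : ((2 * p + 1).factorial : ℝ) = risingFac (3 / 2) p * (p.factorial : ℝ) * 4 ^ p := by
    rw [← risingFac_three_half p]; push_cast; ring
  have hr : risingFac (3 / 2) p ≠ 0 := (risingFac_pos (by norm_num) p).ne'
  have hpf : (p.factorial : ℝ) ≠ 0 := by exact_mod_cast p.factorial_ne_zero
  rw [hG, h2, hfac, div_pow, pow_succ, pow_mul, show (4:ℝ) = 2 * 2 by norm_num, mul_pow]
  field_simp

lemma exp_tsum (y : ℝ) : Real.exp y = ∑' n : ℕ, y ^ n / (n.factorial : ℝ) := by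
  rw [Real.exp_eq_exp_ℝ, NormedSpace.exp_eq_tsum_div]

lemma main_core (ν lam : ℝ) (hν : -1 < ν) :
    (∫ t in Set.Ioi (0 : ℝ), t ^ ν * Real.exp (-(t + lam) ^ 2 / 2))
      = Real.exp (-lam ^ 2 / 2) *
          ((2 ^ ((ν - 1) / 2) * Real.Gamma ((ν + 1) / 2)) *
              oneF1 ((ν + 1) / 2) (1 / 2) (lam ^ 2 / 2)
            - lam * (2 ^ (ν / 2) * Real.Gamma ((ν + 2) / 2)) *
              oneF1 ((ν + 2) / 2) (3 / 2) (lam ^ 2 / 2)) := by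
  set F : ℕ → ℝ → ℝ := fun n t =>
    (-lam) ^ n / (n.factorial : ℝ) * (t ^ (ν + n) * Real.exp (-t ^ 2 / 2)) with hF
  have hνn : ∀ n : ℕ, (-1 : ℝ) < ν + n := by
    intro n
    have : (0:ℝ) ≤ n := Nat.cast_nonneg n
    linarith
  have h_int : ∀ n : ℕ, Integrable (F n) (volume.restrict (Ioi 0)) := by
    intro n
    exact (G_int (hνn n)).const_mul _
  have h_norm_val : ∀ n : ℕ, (∫ t in Ioi (0:ℝ), ‖F n t‖)
      = |lam| ^ n / (n.factorial : ℝ) *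
        (2 ^ ((ν + n - 1) / 2) * Real.Gamma ((ν + n + 1) / 2)) := by
    intro n
    have : (∫ t in Ioi (0:ℝ), ‖F n t‖)
        = ∫ t in Ioi (0:ℝ), |lam| ^ n / (n.factorial : ℝ) *
            (t ^ (ν + n) * Real.exp (-t ^ 2 / 2)) := by
      refine setIntegral_congr_fun measurableSet_Ioi (fun t ht => ?_)
      have ht' : (0:ℝ) < t := ht
      rw [hF]
      simp only [Real.norm_eq_abs, abs_mul, abs_div, abs_pow, abs_neg,
        abs_of_pos (Real.rpow_pos_of_pos ht' _), abs_of_pos (Real.exp_pos _),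
        Nat.abs_cast]
    rw [this, integral_const_mul, G_val (hνn n)]
  have h_sum_norm : Summable (fun n : ℕ => ∫ t in Ioi (0:ℝ), ‖F n t‖) := by
    have hveq : (fun n : ℕ => ∫ t in Ioi (0:ℝ), ‖F n t‖)
        = fun n : ℕ => |lam| ^ n / (n.factorial : ℝ) *
            (2 ^ ((ν + n - 1) / 2) * Real.Gamma ((ν + n + 1) / 2)) := funext h_norm_val
    rw [hveq]
    apply Summable.even_add_odd
    · have := (summable_F1 (b := 1/2) (by norm_num) ((ν + 1) / 2) (lam ^ 2 / 2)).mul_left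
        (2 ^ ((ν - 1) / 2) * Real.Gamma ((ν + 1) / 2))
      refine this.congr fun p => ?_
      rw [← sq_abs lam, ← term_even hν |lam| p]
    · have := ((summable_F1 (b := 3/2) (by norm_num) ((ν + 2) / 2) (lam ^ 2 / 2)).mul_left
        (2 ^ (ν / 2) * Real.Gamma ((ν + 2) / 2))).mul_left |lam|
      refine this.congr fun p => ?_
      rw [← sq_abs lam, ← mul_assoc, ← term_odd hν |lam| p]
  have h_point : ∀ t ∈ Ioi (0:ℝ), t ^ ν * Real.exp (-(t + lam) ^ 2 / 2)
      = Real.exp (-lam ^ 2 / 2) * ∑' n : ℕ, F n t := by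
    intro t ht
    have ht' : (0:ℝ) < t := ht
    have hFt : ∀ n : ℕ, F n t
        = (t ^ ν * Real.exp (-t ^ 2 / 2)) * ((-(lam * t)) ^ n / (n.factorial : ℝ)) := by
      intro n
      rw [hF]
      simp only
      rw [Real.rpow_add ht', Real.rpow_natCast]
      rw [show (-(lam * t)) ^ n = (-lam) ^ n * t ^ n by rw [← neg_mul, mul_comm, mul_pow]; ring_nf]
      field_simp
    rw [tsum_congr hFt, tsum_mul_left, ← exp_tsum (-(lam * t))]
    rw [show -(t + lam) ^ 2 / 2 = -lam ^ 2 / 2 + (-t ^ 2 / 2 + -(lam * t)) by ring,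
      Real.exp_add, Real.exp_add]
    ring
  calc (∫ t in Set.Ioi (0 : ℝ), t ^ ν * Real.exp (-(t + lam) ^ 2 / 2))
      = ∫ t in Ioi (0:ℝ), Real.exp (-lam ^ 2 / 2) * ∑' n : ℕ, F n t :=
        setIntegral_congr_fun measurableSet_Ioi h_point
    _ = Real.exp (-lam ^ 2 / 2) * ∫ t in Ioi (0:ℝ), ∑' n : ℕ, F n t := integral_const_mul _ _
    _ = Real.exp (-lam ^ 2 / 2) * ∑' n : ℕ, ∫ t in Ioi (0:ℝ), F n t := by
        rw [MeasureTheory.integral_tsum_of_summable_integral_norm h_int h_sum_norm]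
    _ = Real.exp (-lam ^ 2 / 2) * ∑' n : ℕ, (-lam) ^ n / (n.factorial : ℝ) *
          (2 ^ ((ν + n - 1) / 2) * Real.Gamma ((ν + n + 1) / 2)) := by
        congr 1
        refine tsum_congr fun n => ?_
        rw [hF]
        simp only
        rw [integral_const_mul, G_val (hνn n)]
    _ = Real.exp (-lam ^ 2 / 2) *
          ((2 ^ ((ν - 1) / 2) * Real.Gamma ((ν + 1) / 2)) *
              oneF1 ((ν + 1) / 2) (1 / 2) (lam ^ 2 / 2)
            - lam * (2 ^ (ν / 2) * Real.Gamma ((ν + 2) / 2)) *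
              oneF1 ((ν + 2) / 2) (3 / 2) (lam ^ 2 / 2)) := by
        congr 1
        set g : ℕ → ℝ := fun n => (-lam) ^ n / (n.factorial : ℝ) *
          (2 ^ ((ν + n - 1) / 2) * Real.Gamma ((ν + n + 1) / 2)) with hg
        have he : ∀ p : ℕ, g (2 * p)
            = (2 ^ ((ν - 1) / 2) * Real.Gamma ((ν + 1) / 2)) *
              (risingFac ((ν + 1) / 2) p / (risingFac (1 / 2) p * (p.factorial : ℝ)) *
                (lam ^ 2 / 2) ^ p) := by
          intro p
          rw [hg]
          simp only
          rw [term_even hν (-lam) p, neg_sq]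
        have ho : ∀ p : ℕ, g (2 * p + 1)
            = -lam * ((2 ^ (ν / 2) * Real.Gamma ((ν + 2) / 2)) *
              (risingFac ((ν + 2) / 2) p / (risingFac (3 / 2) p * (p.factorial : ℝ)) *
                (lam ^ 2 / 2) ^ p)) := by
          intro p
          rw [hg]
          simp only
          rw [term_odd hν (-lam) p, neg_sq, mul_assoc]
        have hse : Summable fun p => g (2 * p) := by
          rw [funext he]
          exact ((summable_F1 (b := 1/2) (by norm_num) _ _).mul_left _)
        have hso : Summable fun p => g (2 * p + 1) := by
          rw [funext ho]
          exact (((summable_F1 (b := 3/2) (by norm_num) _ _).mul_left _).mul_left _)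
        rw [← tsum_even_add_odd hse hso, funext he, funext ho, tsum_mul_left, tsum_mul_left,
          tsum_mul_left]
        rw [oneF1, oneF1]
        ring

theorem parabolic_cylinder_conf_hypergeometric (α lam : ℝ) (hα : -(1 / 2) < α) :
    (∫ t in Set.Ioi (0 : ℝ), t ^ (α - 1 / 2) * Real.exp (-(t + lam) ^ 2 / 2)) =
      (Real.sqrt Real.pi * Real.Gamma (1 / 2 + α) /
          (2 ^ (α / 2 + 1 / 4) * Real.Gamma (3 / 4 + α / 2))) *
          oneF1 (-α / 2 + 1 / 4) (1 / 2) (-lam ^ 2 / 2) -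
        (Real.sqrt Real.pi * Real.Gamma (1 / 2 + α) /
            (2 ^ (α / 2 - 1 / 4) * Real.Gamma (1 / 4 + α / 2))) *
          lam * oneF1 (-α / 2 + 3 / 4) (3 / 2) (-lam ^ 2 / 2) := by
  have hν : (-1 : ℝ) < α - 1 / 2 := by linarith
  have h := main_core (α - 1 / 2) lam hν
  rw [show (α - 1 / 2 + 1) / 2 = α / 2 + 1 / 4 by ring,
    show (α - 1 / 2 + 2) / 2 = α / 2 + 3 / 4 by ring,
    show (α - 1 / 2 - 1) / 2 = α / 2 - 3 / 4 by ring,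
    show (α - 1 / 2) / 2 = α / 2 - 1 / 4 by ring] at h
  rw [h]
  have hk1 := kummer (b := 1 / 2) (by norm_num) (α / 2 + 1 / 4) (lam ^ 2 / 2)
  have hk2 := kummer (b := 3 / 2) (by norm_num) (α / 2 + 3 / 4) (lam ^ 2 / 2)
  rw [show (1 : ℝ) / 2 - (α / 2 + 1 / 4) = -α / 2 + 1 / 4 by ring] at hk1
  rw [show (3 : ℝ) / 2 - (α / 2 + 3 / 4) = -α / 2 + 3 / 4 by ring] at hk2
  have hx : -lam ^ 2 / 2 = -(lam ^ 2 / 2) := by ring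
  rw [hx]
  calc Real.exp (-(lam ^ 2 / 2)) *
        (2 ^ (α / 2 - 3 / 4) * Real.Gamma (α / 2 + 1 / 4) *
            oneF1 (α / 2 + 1 / 4) (1 / 2) (lam ^ 2 / 2) -
          lam * (2 ^ (α / 2 - 1 / 4) * Real.Gamma (α / 2 + 3 / 4)) *
            oneF1 (α / 2 + 3 / 4) (3 / 2) (lam ^ 2 / 2))
      = 2 ^ (α / 2 - 3 / 4) * Real.Gamma (α / 2 + 1 / 4) *
          (Real.exp (-(lam ^ 2 / 2)) * oneF1 (α / 2 + 1 / 4) (1 / 2) (lam ^ 2 / 2)) -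
        lam * (2 ^ (α / 2 - 1 / 4) * Real.Gamma (α / 2 + 3 / 4)) *
          (Real.exp (-(lam ^ 2 / 2)) * oneF1 (α / 2 + 3 / 4) (3 / 2) (lam ^ 2 / 2)) := by
        ring
    _ = 2 ^ (α / 2 - 3 / 4) * Real.Gamma (α / 2 + 1 / 4) *
          oneF1 (-α / 2 + 1 / 4) (1 / 2) (-(lam ^ 2 / 2)) -
        lam * (2 ^ (α / 2 - 1 / 4) * Real.Gamma (α / 2 + 3 / 4)) *
          oneF1 (-α / 2 + 3 / 4) (3 / 2) (-(lam ^ 2 / 2)) := by rw [hk1, hk2]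
    _ = (Real.sqrt Real.pi * Real.Gamma (1 / 2 + α) /
          (2 ^ (α / 2 + 1 / 4) * Real.Gamma (3 / 4 + α / 2))) *
          oneF1 (-α / 2 + 1 / 4) (1 / 2) (-(lam ^ 2 / 2)) -
        (Real.sqrt Real.pi * Real.Gamma (1 / 2 + α) /
            (2 ^ (α / 2 - 1 / 4) * Real.Gamma (1 / 4 + α / 2))) *
          lam * oneF1 (-α / 2 + 3 / 4) (3 / 2) (-(lam ^ 2 / 2)) := by
        have hd := Real.Gamma_mul_Gamma_add_half (α / 2 + 1 / 4)
        rw [show 2 * (α / 2 + 1 / 4) = α + 1 / 2 by ring,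
          show 1 - (α + 1 / 2) = 1 / 2 - α by ring,
          show α / 2 + 1 / 4 + 1 / 2 = α / 2 + 3 / 4 by ring] at hd
        have hA : Real.sqrt Real.pi * Real.Gamma (1 / 2 + α) /
              (2 ^ (α / 2 + 1 / 4) * Real.Gamma (3 / 4 + α / 2))
            = 2 ^ (α / 2 - 3 / 4) * Real.Gamma (α / 2 + 1 / 4) := by
          have hg : (0:ℝ) < Real.Gamma (3 / 4 + α / 2) :=
            Real.Gamma_pos_of_pos (by linarith)
          rw [div_eq_iff (by positivity)]
          rw [show (3:ℝ) / 4 + α / 2 = α / 2 + 3 / 4 by ring]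
          symm
          calc 2 ^ (α / 2 - 3 / 4) * Real.Gamma (α / 2 + 1 / 4) *
                (2 ^ (α / 2 + 1 / 4) * Real.Gamma (α / 2 + 3 / 4))
              = (2 ^ (α / 2 - 3 / 4) * 2 ^ (α / 2 + 1 / 4)) *
                (Real.Gamma (α / 2 + 1 / 4) * Real.Gamma (α / 2 + 3 / 4)) := by ring
            _ = 2 ^ (α - 1 / 2) *
                (Real.Gamma (α + 1 / 2) * 2 ^ ((1:ℝ) / 2 - α) * Real.sqrt Real.pi) := by
                rw [← Real.rpow_add (by norm_num),
                  show α / 2 - 3 / 4 + (α / 2 + 1 / 4) = α - 1 / 2 by ring, hd]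
            _ = (2 ^ (α - 1 / 2) * 2 ^ ((1:ℝ) / 2 - α)) *
                Real.Gamma (α + 1 / 2) * Real.sqrt Real.pi := by ring
            _ = Real.sqrt Real.pi * Real.Gamma (1 / 2 + α) := by
                rw [← Real.rpow_add (by norm_num),
                  show α - 1 / 2 + ((1:ℝ) / 2 - α) = 0 by ring, Real.rpow_zero,
                  show α + 1 / 2 = 1 / 2 + α by ring]
                ring
        have hB : Real.sqrt Real.pi * Real.Gamma (1 / 2 + α) /
              (2 ^ (α / 2 - 1 / 4) * Real.Gamma (1 / 4 + α / 2))
            = 2 ^ (α / 2 - 1 / 4) * Real.Gamma (α / 2 + 3 / 4) := by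
          have hg : (0:ℝ) < Real.Gamma (1 / 4 + α / 2) :=
            Real.Gamma_pos_of_pos (by linarith)
          rw [div_eq_iff (by positivity)]
          rw [show (1:ℝ) / 4 + α / 2 = α / 2 + 1 / 4 by ring]
          symm
          calc 2 ^ (α / 2 - 1 / 4) * Real.Gamma (α / 2 + 3 / 4) *
                (2 ^ (α / 2 - 1 / 4) * Real.Gamma (α / 2 + 1 / 4))
              = (2 ^ (α / 2 - 1 / 4) * 2 ^ (α / 2 - 1 / 4)) *
                (Real.Gamma (α / 2 + 1 / 4) * Real.Gamma (α / 2 + 3 / 4)) := by ring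
            _ = 2 ^ (α - 1 / 2) *
                (Real.Gamma (α + 1 / 2) * 2 ^ ((1:ℝ) / 2 - α) * Real.sqrt Real.pi) := by
                rw [← Real.rpow_add (by norm_num),
                  show α / 2 - 1 / 4 + (α / 2 - 1 / 4) = α - 1 / 2 by ring, hd]
            _ = (2 ^ (α - 1 / 2) * 2 ^ ((1:ℝ) / 2 - α)) *
                Real.Gamma (α + 1 / 2) * Real.sqrt Real.pi := by ring
            _ = Real.sqrt Real.pi * Real.Gamma (1 / 2 + α) := by
                rw [← Real.rpow_add (by norm_num),
                  show α - 1 / 2 + ((1:ℝ) / 2 - α) = 0 by ring, Real.rpow_zero,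
                  show α + 1 / 2 = 1 / 2 + α by ring]
                ring
        rw [hA, hB]
        ring
end
end

section
/- Let a, b ∈ [0, 1) and let z ∈ ℂ with |z| ≥ 6 and z ∉ (−∞,−1)∪(1,∞). Then |F̃_{a,b}(z)| > 1. -/
noncomputable section

open Real Set MeasureTheory intervalIntegral

/-- The Beta function `B(x,y) = ∫₀¹ t^{x−1}(1−t)^{y−1} dt`. -/
def betaFun (x y : ℝ) : ℝ :=
  ∫ t in (0 : ℝ)..1, t ^ (x - 1) * (1 - t) ^ (y - 1)

/-- The analytic continuation `F̃_{a,b}` of `ρ·₂F₁((1−a)/2,(1−b)/2;3/2;ρ²)` given by the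
Euler-type integral
`F̃_{a,b}(z) = B((1−b)/2, 1+b/2)⁻¹ · z · ∫₀¹ (1−t)^{b/2} t^{−(1+b)/2} (1−z²t)^{−(1−a)/2} dt`. -/
def Ftilde (a b : ℝ) (z : ℂ) : ℂ :=
  ((betaFun ((1 - b) / 2) (1 + b / 2) : ℝ) : ℂ)⁻¹ *
    (z * ∫ t in (0 : ℝ)..1,
      (((1 - t) ^ (b / 2) * t ^ (-(1 + b) / 2) : ℝ) : ℂ) *
        ((1 : ℂ) - z ^ 2 * (t : ℂ)) ^ ((-((1 - a) / 2) : ℝ) : ℂ))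

lemma sq_rpow_half {y : ℝ} (hy : 0 ≤ y) : (y ^ 2) ^ ((1:ℝ)/2) = y := by
  rw [← Real.rpow_natCast y 2, ← Real.rpow_mul hy]
  norm_num

lemma le_rpow_half {q x : ℝ} (hq : 0 ≤ q) (h : q ^ 2 ≤ x) : q ≤ x ^ ((1:ℝ)/2) := by
  calc q = (q ^ 2) ^ ((1:ℝ)/2) := (sq_rpow_half hq).symm
    _ ≤ x ^ ((1:ℝ)/2) := Real.rpow_le_rpow (sq_nonneg q) h (by norm_num)

lemma rpow_half_le {q x : ℝ} (hx : 0 ≤ x) (hq : 0 ≤ q) (h : x ≤ q ^ 2) : x ^ ((1:ℝ)/2) ≤ q := by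
  calc x ^ ((1:ℝ)/2) ≤ (q ^ 2) ^ ((1:ℝ)/2) := Real.rpow_le_rpow hx h (by norm_num)
    _ = q := sq_rpow_half hq


lemma abs_re_im_le_sqrt_two (I : ℂ) : |I.re| + |I.im| ≤ Real.sqrt 2 * ‖I‖ := by
  have h2 : (|I.re| + |I.im|)^2 ≤ 2 * ‖I‖ ^ 2 := by
    rw [Complex.sq_norm, Complex.normSq_apply]
    nlinarith [sq_nonneg (|I.re| - |I.im|), sq_abs I.re, sq_abs I.im]
  have h3 : |I.re| + |I.im| = Real.sqrt ((|I.re| + |I.im|)^2) :=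
    (Real.sqrt_sq (by positivity)).symm
  have h4 : Real.sqrt ((|I.re| + |I.im|)^2) ≤ Real.sqrt (2 * ‖I‖ ^ 2) :=
    Real.sqrt_le_sqrt h2
  have h5 : Real.sqrt (2 * ‖I‖ ^ 2) = Real.sqrt 2 * ‖I‖ := by
    rw [Real.sqrt_mul (by norm_num), Real.sqrt_sq (norm_nonneg I)]
  linarith only [h3, h4, h5]

lemma lt_of_sqrt_two_bound {X B2 : ℝ} (hB2 : 0 < B2) (hX : 0 ≤ X)
    (h : (3/2) * B2 ≤ Real.sqrt 2 * X) : B2 < X := by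
  have hs2' : Real.sqrt 2 < 3/2 := by
    nlinarith [Real.sq_sqrt (by norm_num : (0:ℝ) ≤ 2), Real.sqrt_nonneg 2]
  nlinarith [hs2', hB2, hX, h, Real.sqrt_nonneg 2]

set_option maxHeartbeats 16000000 in
theorem Ftilde_large_far_from_origin (a b : ℝ) (ha : a ∈ Set.Ico (0 : ℝ) 1)
    (hb : b ∈ Set.Ico (0 : ℝ) 1) (z : ℂ) (hz : 6 ≤ ‖z‖)
    (hz' : ¬ (z.im = 0 ∧ (z.re < -1 ∨ 1 < z.re))) :
    1 < ‖Ftilde a b z‖ := by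
  obtain ⟨ha0, ha1⟩ := ha
  obtain ⟨hb0, hb1⟩ := hb
  unfold Ftilde
  set R : ℝ := ‖z‖ with hR
  have hR0 : 0 < R := by linarith
  set s : ℝ := (1 - a) / 2 with hs_def
  have hs0 : 0 < s := by rw [hs_def]; linarith
  have hs2 : s ≤ 1/2 := by rw [hs_def]; linarith
  set e : ℝ := -(1 + b) / 2 with he_def
  have he1 : (-1:ℝ) < e := by rw [he_def]; linarith
  set c : ℝ := (1 - b)/2 with hc_def
  have hec : e + 1 = c := by rw [he_def, hc_def]; ring
  have hc0 : 0 < c := by rw [hc_def]; linarith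
  have hc2 : c ≤ 1/2 := by rw [hc_def]; linarith
  set β : ℝ := b / 2 with hβ_def
  have hβ0 : 0 ≤ β := by rw [hβ_def]; linarith
  have hβ2 : β ≤ 1/2 := by rw [hβ_def]; linarith
  -- basic nonreality facts
  have hzim : z.im ≠ 0 := by
    intro h0
    apply hz'
    refine ⟨h0, ?_⟩
    have hre : |z.re| = R := by
      rw [hR, Complex.norm_def, Complex.normSq_apply, h0]
      simp [← Real.sqrt_sq_eq_abs, sq]
    rcases abs_cases z.re with ⟨h1, h2⟩ | ⟨h1, h2⟩
    · right; linarith [hre ▸ h1]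
    · left; linarith [hre ▸ h1]
  have hslit : ∀ t : ℝ, t ∈ Icc (0:ℝ) 1 → ((1:ℂ) - z^2 * t) ∈ Complex.slitPlane := by
    intro t ht
    rw [Complex.mem_slitPlane_iff]
    by_cases hre : z.re = 0
    · left
      have h1 : (z^2).re = -(z.im^2) := by rw [pow_two, Complex.mul_re, hre]; ring
      have h2 : (z^2).im = 0 := by rw [pow_two, Complex.mul_im, hre]; ring
      have : ((1:ℂ) - z^2 * t).re = 1 + z.im^2 * t := by
        simp [Complex.sub_re, Complex.mul_re, h1, h2]
      rw [this]
      nlinarith [ht.1, sq_nonneg z.im]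
    · rcases eq_or_lt_of_le ht.1 with h0 | h0
      · left; rw [← h0]; norm_num
      · right
        have h3 : ((1:ℂ) - z^2 * t).im = -((z^2).im * t) := by
          simp [Complex.sub_im, Complex.mul_im]
        have h4 : (z^2).im = 2 * z.re * z.im := by rw [pow_two, Complex.mul_im]; ring
        rw [h3, h4]
        intro hcon
        rcases mul_eq_zero.mp (neg_eq_zero.mp hcon) with h5 | h5
        · rcases mul_eq_zero.mp h5 with h6 | h6
          · rcases mul_eq_zero.mp h6 with h7 | h7
            · norm_num at h7
            · exact hre h7
          · exact hzim h6
        · exact absurd h5 (ne_of_gt h0)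
  set f : ℝ → ℂ := fun t : ℝ => ((1:ℂ) - z^2 * t) ^ ((-s : ℝ) : ℂ) with hf_def
  set W : ℝ → ℝ := fun t : ℝ => (1 - t) ^ β * t ^ e with hW_def
  set g : ℝ → ℝ := fun t : ℝ => (1 + R^2 * t) ^ (-(1/2) : ℝ) with hg_def
  -- continuity
  have hf_cont : ContinuousOn f (Icc 0 1) := by
    intro t ht
    have : ContinuousAt f t := by
      have h1 : ContinuousAt (fun w : ℂ => w ^ ((-s : ℝ) : ℂ)) ((1:ℂ) - z^2 * t) :=
        continuousAt_cpow_const (hslit t ht)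
      have h2 : ContinuousAt (fun t : ℝ => (1:ℂ) - z^2 * t) t := by fun_prop
      exact ContinuousAt.comp (f := fun t : ℝ => (1:ℂ) - z^2 * t) h1 h2
    exact this.continuousWithinAt
  have hg_cont : ContinuousOn g (Icc 0 1) := by
    intro t ht
    have hpos : (0:ℝ) < 1 + R^2 * t := by nlinarith [ht.1, sq_nonneg R]
    have : ContinuousAt g t := by
      have h1 : ContinuousAt (fun x : ℝ => x ^ (-(1/2) : ℝ)) (1 + R^2 * t) :=
        Real.continuousAt_rpow_const _ _ (Or.inl hpos.ne')
      have h2 : ContinuousAt (fun t : ℝ => 1 + R^2 * t) t := by fun_prop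
      exact ContinuousAt.comp (f := fun t : ℝ => 1 + R^2 * t) h1 h2
    exact this.continuousWithinAt
  have hWpow_cont : Continuous (fun t : ℝ => (1 - t) ^ β) := by
    rw [continuous_iff_continuousAt]
    intro x
    exact (Real.continuousAt_rpow_const _ _ (Or.inr hβ0)).comp (by fun_prop)
  -- integrability
  have hW_int : ∀ l u : ℝ, IntervalIntegrable W volume l u := by
    intro l u
    exact (intervalIntegrable_rpow' he1).continuousOn_mul hWpow_cont.continuousOn
  have hW_nonneg : ∀ t : ℝ, t ∈ Icc (0:ℝ) 1 → 0 ≤ W t := by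
    intro t ht
    exact mul_nonneg (Real.rpow_nonneg (by linarith [ht.2]) _) (Real.rpow_nonneg ht.1 _)
  have hsub : ∀ l u : ℝ, 0 ≤ l → l ≤ u → u ≤ 1 → Set.uIcc l u ⊆ Icc 0 1 := by
    intro l u h1 h2 h3
    rw [uIcc_of_le h2]
    exact Icc_subset_Icc h1 h3
  have hWg_int : ∀ l u : ℝ, 0 ≤ l → l ≤ u → u ≤ 1 →
      IntervalIntegrable (fun t => W t * g t) volume l u := by
    intro l u h1 h2 h3
    exact (hW_int l u).mul_continuousOn (hg_cont.mono (hsub l u h1 h2 h3))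
  -- pointwise complex estimates
  set σ : ℝ := if 0 ≤ (z^2).im then 1 else -1 with hσ_def
  have hσ_cases : σ = 1 ∧ 0 ≤ (z^2).im ∨ σ = -1 ∧ (z^2).im < 0 := by
    rw [hσ_def]; split
    · exact Or.inl ⟨rfl, by assumption⟩
    · exact Or.inr ⟨rfl, by linarith [lt_of_not_ge (by assumption)]⟩
  have himu : ∀ t : ℝ, ((1:ℂ) - z^2 * t).im = -((z^2).im * t) := by
    intro t; simp [Complex.sub_im, Complex.mul_im]
  have hu_ne : ∀ t : ℝ, t ∈ Icc (0:ℝ) 1 → ((1:ℂ) - z^2 * t) ≠ 0 :=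
    fun t ht => Complex.slitPlane_ne_zero (hslit t ht)
  have hre_f : ∀ t : ℝ, t ∈ Icc (0:ℝ) 1 → 0 ≤ (f t).re := by
    intro t ht
    rw [hf_def]
    simp only []
    rw [Complex.cpow_ofReal_re]
    apply mul_nonneg (Real.rpow_nonneg (norm_nonneg _) _)
    apply Real.cos_nonneg_of_mem_Icc
    have hpi := Complex.abs_arg_le_pi ((1:ℂ) - z^2 * t)
    have hpi0 := Real.pi_pos
    rcases abs_le.mp hpi with ⟨hp1, hp2⟩
    constructor <;> nlinarith
  have him_f : ∀ t : ℝ, t ∈ Icc (0:ℝ) 1 → 0 ≤ σ * (f t).im := by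
    intro t ht
    rw [hf_def]
    simp only []
    rw [Complex.cpow_ofReal_im]
    have hpi0 := Real.pi_pos
    have hpi := Complex.abs_arg_le_pi ((1:ℂ) - z^2 * t)
    rcases abs_le.mp hpi with ⟨hp1, hp2⟩
    rcases hσ_cases with ⟨hσ1, hY⟩ | ⟨hσ1, hY⟩
    · rw [hσ1, one_mul]
      apply mul_nonneg (Real.rpow_nonneg (norm_nonneg _) _)
      apply Real.sin_nonneg_of_nonneg_of_le_pi
      · -- 0 ≤ arg u * -s since arg u ≤ 0
        have him_le : ((1:ℂ) - z^2 * t).im ≤ 0 := by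
          rw [himu t]; exact neg_nonpos.mpr (mul_nonneg hY ht.1)
        have harg : Complex.arg ((1:ℂ) - z^2 * t) ≤ 0 := by
          rcases him_le.lt_or_eq with hlt | heq
          · by_contra hcon
            push_neg at hcon
            have := Complex.arg_nonneg_iff.mp hcon.le
            linarith
          · have hsl := hslit t ht
            rw [Complex.mem_slitPlane_iff] at hsl
            have hre2 : 0 < ((1:ℂ) - z^2 * t).re := hsl.resolve_right (by rw [heq]; simp)
            rw [Complex.arg_eq_zero_iff.mpr ⟨hre2.le, heq⟩]
        nlinarith
      · nlinarith
    · rw [hσ1]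
      have him_ge : 0 ≤ ((1:ℂ) - z^2 * t).im := by
        rw [himu t]; rw [neg_nonneg]; exact mul_nonpos_of_nonpos_of_nonneg hY.le ht.1
      have harg : 0 ≤ Complex.arg ((1:ℂ) - z^2 * t) := Complex.arg_nonneg_iff.mpr him_ge
      have hsin : Real.sin (Complex.arg ((1:ℂ) - z^2 * t) * (-s)) ≤ 0 := by
        apply Real.sin_nonpos_of_nonpos_of_neg_pi_le
        · nlinarith
        · nlinarith
      nlinarith [Real.rpow_nonneg (norm_nonneg ((1:ℂ) - z^2 * t)) (-s),
        mul_nonpos_of_nonneg_of_nonpos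
          (Real.rpow_nonneg (norm_nonneg ((1:ℂ) - z^2 * t)) (-s)) hsin]
  have habs_f : ∀ t : ℝ, t ∈ Icc (0:ℝ) 1 → g t ≤ ‖f t‖ := by
    intro t ht
    rw [hf_def]
    simp only []
    rw [Complex.norm_cpow_real]
    have hu_pos : 0 < ‖(1:ℂ) - z^2 * t‖ := norm_pos_iff.mpr (hu_ne t ht)
    have hub : ‖(1:ℂ) - z^2 * t‖ ≤ 1 + R^2 * t := by
      have h1 := norm_sub_le (1:ℂ) (z^2 * (t:ℂ))
      simp only [norm_one] at h1
      calc ‖(1:ℂ) - z^2 * t‖ ≤ 1 + ‖z^2 * (t:ℂ)‖ := h1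
        _ = 1 + R^2 * t := by
            rw [norm_mul, norm_pow, Complex.norm_real, Real.norm_eq_abs, abs_of_nonneg ht.1, ← hR]
    have h1pos : (0:ℝ) < 1 + R^2 * t := by nlinarith [ht.1, sq_nonneg R]
    calc g t = (1 + R^2 * t) ^ (-(1/2) : ℝ) := rfl
      _ ≤ (1 + R^2 * t) ^ (-s : ℝ) :=
          Real.rpow_le_rpow_of_exponent_le (by nlinarith [ht.1, sq_nonneg R]) (by linarith)
      _ ≤ ‖(1:ℂ) - z^2 * t‖ ^ (-s : ℝ) :=
          Real.rpow_le_rpow_of_nonpos hu_pos hub (by linarith)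
  -- numeric parameters
  set ε : ℝ := (R^2)⁻¹ with hε_def
  set t₀ : ℝ := (49/225 : ℝ) with ht₀_def
  have hR2 : (36:ℝ) ≤ R^2 := by nlinarith
  have hR2pos : (0:ℝ) < R^2 := by positivity
  have hε0 : 0 < ε := by rw [hε_def]; positivity
  have hε36 : ε ≤ 1/36 := by
    rw [hε_def, show (1:ℝ)/36 = (36:ℝ)⁻¹ by norm_num]
    exact inv_anti₀ (by norm_num) hR2
  have hεt₀ : ε ≤ t₀ := by rw [ht₀_def]; linarith
  have ht₀1 : t₀ ≤ 1 := by rw [ht₀_def]; norm_num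
  have ht₀0 : 0 < t₀ := by rw [ht₀_def]; norm_num
  have ht₀half : t₀ ^ ((1:ℝ)/2) = 7/15 := by
    rw [ht₀_def, show (49/225:ℝ) = (7/15)^2 by norm_num]
    exact sq_rpow_half (by norm_num)
  have ht₀invhalf : t₀ ^ (-(1/2) : ℝ) = 15/7 := by
    rw [Real.rpow_neg ht₀0.le, ht₀half]; norm_num
  have h2half : (7/10 : ℝ) ≤ (2:ℝ) ^ (-(1/2) : ℝ) := by
    have h2 : (2:ℝ) ^ ((1:ℝ)/2) ≤ 10/7 := rpow_half_le (by norm_num) (by norm_num) (by norm_num)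
    have hp : (0:ℝ) < (2:ℝ) ^ ((1:ℝ)/2) := Real.rpow_pos_of_pos (by norm_num) _
    rw [Real.rpow_neg (by norm_num : (0:ℝ) ≤ 2)]
    calc (7/10:ℝ) = (10/7)⁻¹ := by norm_num
      _ ≤ ((2:ℝ) ^ ((1:ℝ)/2))⁻¹ := inv_anti₀ hp h2
  -- pointwise bounds on g
  have hg_head : ∀ t : ℝ, t ∈ Icc (0:ℝ) ε → (7/10:ℝ) ≤ g t := by
    intro t ht
    have h1 : R^2 * t ≤ 1 := by
      calc R^2 * t ≤ R^2 * ε := by nlinarith [ht.2]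
        _ = 1 := by rw [hε_def]; field_simp
    have h2 : (1:ℝ) + R^2 * t ≤ 2 := by linarith
    have h3 : (0:ℝ) < 1 + R^2 * t := by nlinarith [ht.1]
    calc (7/10:ℝ) ≤ (2:ℝ) ^ (-(1/2) : ℝ) := h2half
      _ ≤ (1 + R^2 * t) ^ (-(1/2) : ℝ) :=
          Real.rpow_le_rpow_of_nonpos h3 h2 (by norm_num)
  have hg_tail : ∀ t : ℝ, t ∈ Icc ε (1:ℝ) → (7/10) * t ^ (-(1/2):ℝ) ≤ R * g t := by
    intro t ht
    have ht0 : 0 < t := lt_of_lt_of_le hε0 ht.1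
    have h1 : (1:ℝ) ≤ R^2 * t := by
      have : R^2 * ε ≤ R^2 * t := by nlinarith [ht.1]
      rw [hε_def, mul_inv_cancel₀ hR2pos.ne'] at this
      exact this
    have h2 : (1:ℝ) + R^2 * t ≤ 2 * (R^2 * t) := by linarith
    have h3 : (0:ℝ) < 1 + R^2 * t := by linarith
    have h4 : g t ≥ (2 * (R^2 * t)) ^ (-(1/2) : ℝ) :=
      Real.rpow_le_rpow_of_nonpos h3 h2 (by norm_num)
    have h5 : (2 * (R^2 * t)) ^ (-(1/2) : ℝ)
        = (2:ℝ) ^ (-(1/2) : ℝ) * ((R^2) ^ (-(1/2) : ℝ) * t ^ (-(1/2) : ℝ)) := by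
      rw [Real.mul_rpow (by norm_num) (by positivity), Real.mul_rpow (sq_nonneg R) ht0.le]
    have h6 : (R^2 : ℝ) ^ (-(1/2) : ℝ) = R⁻¹ := by
      rw [Real.rpow_neg (sq_nonneg R), sq_rpow_half hR0.le]
    have h7 : 0 ≤ t ^ (-(1/2):ℝ) := Real.rpow_nonneg ht0.le _
    have h8 : R * ((2:ℝ) ^ (-(1/2) : ℝ) * (R⁻¹ * t ^ (-(1/2) : ℝ)))
        = (2:ℝ) ^ (-(1/2) : ℝ) * t ^ (-(1/2) : ℝ) := by
      field_simp
    calc (7/10) * t ^ (-(1/2):ℝ) ≤ (2:ℝ) ^ (-(1/2) : ℝ) * t ^ (-(1/2):ℝ) := by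
          nlinarith [h2half, h7]
      _ = R * ((2 * (R^2 * t)) ^ (-(1/2) : ℝ)) := by rw [h5, h6, h8]
      _ ≤ R * g t := by nlinarith [h4, hR0]
  -- continuity of t ^ (-1/2) away from 0
  have hτ_cont : ContinuousOn (fun t : ℝ => t ^ (-(1/2):ℝ)) (Set.uIcc t₀ 1) := by
    intro t ht
    rw [uIcc_of_le ht₀1] at ht
    have ht0 : t ≠ 0 := (lt_of_lt_of_le ht₀0 ht.1).ne'
    exact (Real.continuousAt_rpow_const _ _ (Or.inl ht0)).continuousWithinAt
  have hWτ_int : IntervalIntegrable (fun t => W t * t ^ (-(1/2):ℝ)) volume t₀ 1 :=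
    (hW_int t₀ 1).mul_continuousOn hτ_cont
  -- piecewise integral inequalities
  have hq1 : (7/10) * ∫ t in (0:ℝ)..ε, W t ≤ ∫ t in (0:ℝ)..ε, W t * g t := by
    rw [← intervalIntegral.integral_const_mul]
    apply intervalIntegral.integral_mono_on hε0.le ((hW_int 0 ε).const_mul _)
      (hWg_int 0 ε le_rfl hε0.le (le_trans hε36 (by norm_num)))
    intro t ht
    have htI : t ∈ Icc (0:ℝ) 1 := ⟨ht.1, le_trans ht.2 (le_trans hε36 (by norm_num))⟩
    have := hg_head t ht
    nlinarith [hW_nonneg t htI]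
  have hq2 : (3/2) * ∫ t in ε..t₀, W t ≤ R * ∫ t in ε..t₀, W t * g t := by
    rw [← intervalIntegral.integral_const_mul, ← intervalIntegral.integral_const_mul]
    apply intervalIntegral.integral_mono_on hεt₀ ((hW_int ε t₀).const_mul _)
      ((hWg_int ε t₀ hε0.le hεt₀ ht₀1).const_mul _)
    intro t ht
    have ht0 : 0 < t := lt_of_lt_of_le hε0 ht.1
    have htI : t ∈ Icc (0:ℝ) 1 := ⟨ht0.le, le_trans ht.2 ht₀1⟩
    have hgt := hg_tail t ⟨ht.1, le_trans ht.2 ht₀1⟩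
    have hτ : (15/7 : ℝ) ≤ t ^ (-(1/2):ℝ) := by
      rw [← ht₀invhalf]
      exact Real.rpow_le_rpow_of_nonpos ht0 ht.2 (by norm_num)
    have hW0 := hW_nonneg t htI
    have : (3/2 : ℝ) ≤ R * g t := by nlinarith
    nlinarith
  have hq3 : (7/10) * ∫ t in t₀..1, W t * t ^ (-(1/2):ℝ) ≤ R * ∫ t in t₀..1, W t * g t := by
    rw [← intervalIntegral.integral_const_mul, ← intervalIntegral.integral_const_mul]
    apply intervalIntegral.integral_mono_on ht₀1 (hWτ_int.const_mul _)
      ((hWg_int t₀ 1 ht₀0.le ht₀1 le_rfl).const_mul _)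
    intro t ht
    have ht0 : 0 < t := lt_of_lt_of_le ht₀0 ht.1
    have htI : t ∈ Icc (0:ℝ) 1 := ⟨ht0.le, ht.2⟩
    have hgt := hg_tail t ⟨le_trans hεt₀ ht.1, ht.2⟩
    have hW0 := hW_nonneg t htI
    have h9 := mul_le_mul_of_nonneg_left hgt hW0
    calc (7/10) * (W t * t ^ (-(1/2):ℝ)) = W t * ((7/10) * t ^ (-(1/2):ℝ)) := by ring
      _ ≤ W t * (R * g t) := h9
      _ = R * (W t * g t) := by ring
  have hq4 : (∫ t in t₀..1, ((3/2) * W t - (7/10) * (W t * t ^ (-(1/2):ℝ))))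
      ≤ ∫ t in t₀..1, (4/5) * t ^ e := by
    apply intervalIntegral.integral_mono_on ht₀1
      (((hW_int t₀ 1).const_mul _).sub (hWτ_int.const_mul _))
      ((intervalIntegrable_rpow' he1).const_mul _)
    intro t ht
    have ht0 : 0 < t := lt_of_lt_of_le ht₀0 ht.1
    have hv0 : 0 ≤ (1-t) ^ β := Real.rpow_nonneg (by linarith [ht.2]) _
    have hv1 : (1-t) ^ β ≤ 1 := Real.rpow_le_one (by linarith [ht.2]) (by linarith) hβ0
    have hτ1 : (1:ℝ) ≤ t ^ (-(1/2):ℝ) := by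
      have := Real.rpow_le_rpow_of_nonpos ht0 ht.2 (by norm_num : (-(1/2):ℝ) ≤ 0)
      rwa [Real.one_rpow] at this
    have hτ2 : t ^ (-(1/2):ℝ) ≤ 15/7 := by
      rw [← ht₀invhalf]
      exact Real.rpow_le_rpow_of_nonpos ht₀0 ht.1 (by norm_num)
    have hp : 0 ≤ t ^ e := Real.rpow_nonneg ht0.le _
    have hx : 0 ≤ (1 - (1-t) ^ β) * (3/2 - (7/10) * t ^ (-(1/2):ℝ)) :=
      mul_nonneg (by linarith) (by linarith)
    have h2 : (1-t) ^ β * (3/2 - (7/10) * t ^ (-(1/2):ℝ)) ≤ 4/5 := by linarith [hx, hτ1]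
    have h3 := mul_le_mul_of_nonneg_left h2 hp
    calc (3/2) * W t - (7/10) * (W t * t ^ (-(1/2):ℝ))
        = t ^ e * ((1-t) ^ β * (3/2 - (7/10) * t ^ (-(1/2):ℝ))) := by rw [hW_def]; ring
      _ ≤ t ^ e * (4/5) := h3
      _ = (4/5) * t ^ e := by ring
  have hq5 : (49/50) * ((∫ t in (0:ℝ)..ε, t ^ e)) ≤ ∫ t in (0:ℝ)..ε, W t := by
    rw [← intervalIntegral.integral_const_mul]
    apply intervalIntegral.integral_mono_on hε0.le
      ((intervalIntegrable_rpow' he1).const_mul _) (hW_int 0 ε)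
    intro t ht
    have hp : 0 ≤ t ^ e := Real.rpow_nonneg ht.1 _
    have h1 : (35/36 : ℝ) ≤ 1 - t := by
      have := le_trans ht.2 hε36; linarith
    have h2 : ((35:ℝ)/36) ^ β ≤ (1-t) ^ β := Real.rpow_le_rpow (by norm_num) h1 hβ0
    have h3 : ((35:ℝ)/36) ^ ((1:ℝ)/2) ≤ ((35:ℝ)/36) ^ β :=
      Real.rpow_le_rpow_of_exponent_ge (by norm_num) (by norm_num) hβ2
    have h4 : (49/50 : ℝ) ≤ ((35:ℝ)/36) ^ ((1:ℝ)/2) :=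
      le_rpow_half (by norm_num) (by norm_num)
    have h5 : (49/50 : ℝ) ≤ (1-t) ^ β := by linarith
    calc (49/50) * t ^ e ≤ (1-t) ^ β * t ^ e := by nlinarith
      _ = W t := by rw [hW_def]
  -- explicit rpow integrals
  have hv1 : (∫ t in (0:ℝ)..ε, t ^ e) = ε ^ c / c := by
    rw [integral_rpow (Or.inl he1), hec, Real.zero_rpow hc0.ne']
    ring
  have hv2 : (∫ t in t₀..1, t ^ e) = (1 - t₀ ^ c) / c := by
    rw [integral_rpow (Or.inl he1), hec, Real.one_rpow]
  -- numeric estimates on rpow values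
  have hεc : R⁻¹ ≤ ε ^ c := by
    have h1 : ε ^ c = ((R^2) ^ c)⁻¹ := by rw [hε_def]; exact Real.inv_rpow (sq_nonneg R) c
    have h2 : (R^2) ^ c ≤ (R^2) ^ ((1:ℝ)/2) :=
      Real.rpow_le_rpow_of_exponent_le (by nlinarith) hc2
    have h3 : (R^2) ^ ((1:ℝ)/2) = R := sq_rpow_half hR0.le
    rw [h1]
    exact inv_anti₀ (Real.rpow_pos_of_pos hR2pos c) (le_of_le_of_eq h2 h3)
  have hεc0 : 0 ≤ ε ^ c := Real.rpow_nonneg hε0.le c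
  have ht₀c : (7/15 : ℝ) ≤ t₀ ^ c := by
    rw [← ht₀half]
    exact Real.rpow_le_rpow_of_exponent_ge ht₀0 ht₀1 hc2
  have hcoef : (0:ℝ) ≤ 7/10 * R - 3/2 := by linarith
  have hnum : (4/5) * ((1 - t₀ ^ c) / c) ≤ (7/10 * R - 3/2) * ((49/50) * (ε ^ c / c)) := by
    have h1 : (1:ℝ) ≤ R * ε ^ c := by
      have h0 : R * R⁻¹ ≤ R * ε ^ c := mul_le_mul_of_nonneg_left hεc hR0.le
      rwa [mul_inv_cancel₀ hR0.ne'] at h0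
    have h6 : 0 ≤ (R - 6) * ε ^ c := mul_nonneg (by linarith) hεc0
    have goal' : (4/5) * (1 - t₀ ^ c) ≤ (7/10 * R - 3/2) * ((49/50) * ε ^ c) := by
      nlinarith [h1, h6, ht₀c]
    calc (4/5) * ((1 - t₀ ^ c) / c) = ((4/5) * (1 - t₀ ^ c)) * c⁻¹ := by ring
      _ ≤ ((7/10 * R - 3/2) * ((49/50) * ε ^ c)) * c⁻¹ :=
          mul_le_mul_of_nonneg_right goal' (inv_nonneg.mpr hc0.le)
      _ = (7/10 * R - 3/2) * ((49/50) * (ε ^ c / c)) := by ring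
  -- splitting the integrals
  have hsB1 : (∫ t in (0:ℝ)..ε, W t) + (∫ t in ε..(1:ℝ), W t) = ∫ t in (0:ℝ)..1, W t :=
    intervalIntegral.integral_add_adjacent_intervals (hW_int 0 ε) (hW_int ε 1)
  have hsB2 : (∫ t in ε..t₀, W t) + (∫ t in t₀..(1:ℝ), W t) = ∫ t in ε..(1:ℝ), W t :=
    intervalIntegral.integral_add_adjacent_intervals (hW_int ε t₀) (hW_int t₀ 1)
  have hsK1 : (∫ t in (0:ℝ)..ε, W t * g t) + (∫ t in ε..(1:ℝ), W t * g t)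
      = ∫ t in (0:ℝ)..1, W t * g t :=
    intervalIntegral.integral_add_adjacent_intervals
      (hWg_int 0 ε le_rfl hε0.le (le_trans hεt₀ ht₀1))
      (hWg_int ε 1 hε0.le (le_trans hεt₀ ht₀1) le_rfl)
  have hsK2 : (∫ t in ε..t₀, W t * g t) + (∫ t in t₀..(1:ℝ), W t * g t)
      = ∫ t in ε..(1:ℝ), W t * g t :=
    intervalIntegral.integral_add_adjacent_intervals
      (hWg_int ε t₀ hε0.le hεt₀ ht₀1)
      (hWg_int t₀ 1 ht₀0.le ht₀1 le_rfl)
  have hq4' : (3/2) * (∫ t in t₀..(1:ℝ), W t) - (7/10) * (∫ t in t₀..1, W t * t ^ (-(1/2):ℝ))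
      ≤ (4/5) * ((1 - t₀ ^ c) / c) := by
    have hsub2 : (∫ t in t₀..(1:ℝ), ((3/2) * W t - (7/10) * (W t * t ^ (-(1/2):ℝ))))
        = (3/2) * (∫ t in t₀..(1:ℝ), W t) - (7/10) * (∫ t in t₀..1, W t * t ^ (-(1/2):ℝ)) := by
      rw [intervalIntegral.integral_sub ((hW_int t₀ 1).const_mul _) (hWτ_int.const_mul _),
        intervalIntegral.integral_const_mul, intervalIntegral.integral_const_mul]
    rw [← hsub2]
    calc (∫ t in t₀..(1:ℝ), ((3/2) * W t - (7/10) * (W t * t ^ (-(1/2):ℝ))))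
        ≤ ∫ t in t₀..1, (4/5) * t ^ e := hq4
      _ = (4/5) * ((1 - t₀ ^ c) / c) := by
          rw [intervalIntegral.integral_const_mul, hv2]
  have hq5' : (49/50) * (ε ^ c / c) ≤ ∫ t in (0:ℝ)..ε, W t := by
    rw [← hv1]; exact hq5
  have hMain : (3/2) * (∫ t in (0:ℝ)..1, W t) ≤ R * ∫ t in (0:ℝ)..1, W t * g t := by
    rw [← hsB1, ← hsB2, ← hsK1, ← hsK2]
    have hA : (7/10) * (R * ∫ t in (0:ℝ)..ε, W t) ≤ R * ∫ t in (0:ℝ)..ε, W t * g t := by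
      have h9 := mul_le_mul_of_nonneg_left hq1 hR0.le
      calc (7/10) * (R * ∫ t in (0:ℝ)..ε, W t)
          = R * ((7/10) * ∫ t in (0:ℝ)..ε, W t) := by ring
        _ ≤ R * ∫ t in (0:ℝ)..ε, W t * g t := h9
    have hB : (4/5) * ((1 - t₀ ^ c) / c)
        ≤ (7/10) * (R * ∫ t in (0:ℝ)..ε, W t) - (3/2) * ∫ t in (0:ℝ)..ε, W t := by
      have h1 : (7/10 * R - 3/2) * ((49/50) * (ε ^ c / c))
          ≤ (7/10 * R - 3/2) * ∫ t in (0:ℝ)..ε, W t :=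
        mul_le_mul_of_nonneg_left hq5' hcoef
      calc (4/5) * ((1 - t₀ ^ c) / c) ≤ (7/10 * R - 3/2) * ((49/50) * (ε ^ c / c)) := hnum
        _ ≤ (7/10 * R - 3/2) * ∫ t in (0:ℝ)..ε, W t := h1
        _ = (7/10) * (R * ∫ t in (0:ℝ)..ε, W t) - (3/2) * ∫ t in (0:ℝ)..ε, W t := by ring
    have hC : (3/2) * (∫ t in (0:ℝ)..ε, W t) + (3/2) * (∫ t in t₀..(1:ℝ), W t)
        ≤ (7/10) * (R * ∫ t in (0:ℝ)..ε, W t)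
          + (7/10) * (∫ t in t₀..1, W t * t ^ (-(1/2):ℝ)) := by
      linarith only [hq4', hB]
    linarith only [hA, hC, hq2, hq3]
  -- the complex integral
  set I : ℂ := ∫ t in (0:ℝ)..1, (((1 - t) ^ β * t ^ e : ℝ) : ℂ) *
      ((1 : ℂ) - z ^ 2 * (t : ℂ)) ^ ((-s : ℝ) : ℂ) with hI_def
  have hWC : IntervalIntegrable (fun t => ((W t : ℝ) : ℂ)) volume 0 1 :=
    ⟨(hW_int 0 1).1.ofReal, (hW_int 0 1).2.ofReal⟩
  have hf_cont' : ContinuousOn f (Set.uIcc 0 1) := by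
    rw [uIcc_of_le (by norm_num : (0:ℝ) ≤ 1)]; exact hf_cont
  have hF_int : IntervalIntegrable (fun t => ((W t : ℝ) : ℂ) * f t) volume 0 1 :=
    hWC.mul_continuousOn hf_cont'
  have hIeq : I = ∫ t in (0:ℝ)..1, ((W t : ℝ) : ℂ) * f t := rfl
  have hre_cont : ContinuousOn (fun t => (f t).re) (Set.uIcc 0 1) :=
    Complex.continuous_re.comp_continuousOn hf_cont'
  have him_cont : ContinuousOn (fun t => (f t).im) (Set.uIcc 0 1) :=
    Complex.continuous_im.comp_continuousOn hf_cont'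
  have hWre_int : IntervalIntegrable (fun t => W t * (f t).re) volume 0 1 :=
    (hW_int 0 1).mul_continuousOn hre_cont
  have hWim_int : IntervalIntegrable (fun t => W t * (f t).im) volume 0 1 :=
    (hW_int 0 1).mul_continuousOn him_cont
  have hIre : I.re = ∫ t in (0:ℝ)..1, W t * (f t).re := by
    have h2 := Complex.reCLM.intervalIntegral_comp_comm (a := (0:ℝ)) (b := 1) hF_int
    simp only [Complex.reCLM_apply] at h2
    rw [hIeq, ← h2]
    apply intervalIntegral.integral_congr
    intro t _
    simp [Complex.re_ofReal_mul]
  have hIim : I.im = ∫ t in (0:ℝ)..1, W t * (f t).im := by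
    have h2 := Complex.imCLM.intervalIntegral_comp_comm (a := (0:ℝ)) (b := 1) hF_int
    simp only [Complex.imCLM_apply] at h2
    rw [hIeq, ← h2]
    apply intervalIntegral.integral_congr
    intro t _
    simp [Complex.im_ofReal_mul]
  have hφ_cont : ContinuousOn (fun t => (f t).re + σ * (f t).im) (Set.uIcc 0 1) :=
    hre_cont.add (continuousOn_const.mul him_cont)
  have hφ_int : IntervalIntegrable (fun t => W t * ((f t).re + σ * (f t).im)) volume 0 1 :=
    (hW_int 0 1).mul_continuousOn hφ_cont
  have hσabs : |σ| = 1 := by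
    rcases hσ_cases with ⟨h, _⟩ | ⟨h, _⟩ <;> rw [h] <;> norm_num
  have hPQ : (∫ t in (0:ℝ)..1, W t * g t)
      ≤ ∫ t in (0:ℝ)..1, W t * ((f t).re + σ * (f t).im) := by
    apply intervalIntegral.integral_mono_on (by norm_num)
      (hWg_int 0 1 le_rfl (by norm_num) le_rfl) hφ_int
    intro t ht
    have h1 := habs_f t ht
    have h2 := hre_f t ht
    have h3 := him_f t ht
    have h4 := Complex.norm_le_abs_re_add_abs_im (f t)
    have h5 : |(f t).im| = σ * (f t).im := by
      have h9 := abs_of_nonneg h3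
      rw [abs_mul, hσabs, one_mul] at h9
      exact h9
    have h6 : g t ≤ (f t).re + σ * (f t).im := by
      rw [← h5, ← abs_of_nonneg h2]
      exact le_trans h1 h4
    exact mul_le_mul_of_nonneg_left h6 (hW_nonneg t ht)
  have hsplitφ : (∫ t in (0:ℝ)..1, W t * ((f t).re + σ * (f t).im))
      = I.re + σ * I.im := by
    have hfun : (fun t => W t * ((f t).re + σ * (f t).im))
        = fun t => W t * (f t).re + σ * (W t * (f t).im) := by
      funext t; ring
    rw [hfun, intervalIntegral.integral_add hWre_int (hWim_int.const_mul σ),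
      intervalIntegral.integral_const_mul, hIre, hIim]
  have hIabs : I.re + σ * I.im ≤ Real.sqrt 2 * ‖I‖ := by
    have ha := le_abs_self I.re
    have hb : σ * I.im ≤ |I.im| := by
      calc σ * I.im ≤ |σ * I.im| := le_abs_self _
        _ = |I.im| := by rw [abs_mul, hσabs, one_mul]
    have h2 := abs_re_im_le_sqrt_two I
    linarith only [ha, hb, h2]
  -- positivity of the beta integral
  have hJ2 : 0 ≤ ∫ t in ε..t₀, W t :=
    intervalIntegral.integral_nonneg hεt₀
      (fun u hu => hW_nonneg u ⟨le_trans hε0.le hu.1, le_trans hu.2 ht₀1⟩)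
  have hJ3 : 0 ≤ ∫ t in t₀..(1:ℝ), W t :=
    intervalIntegral.integral_nonneg ht₀1
      (fun u hu => hW_nonneg u ⟨le_trans ht₀0.le hu.1, hu.2⟩)
  have hBpos : 0 < ∫ t in (0:ℝ)..1, W t := by
    rw [← hsB1, ← hsB2]
    have h0 : 0 < (49/50) * (ε ^ c / c) := by positivity
    linarith only [hq5', h0, hJ2, hJ3]
  have hBeq : betaFun c (1 + β) = ∫ t in (0:ℝ)..1, W t := by
    unfold betaFun
    apply intervalIntegral.integral_congr
    intro t _
    rw [show c - 1 = e by rw [hc_def, he_def]; ring,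
      show 1 + β - 1 = β by ring]
    exact mul_comm _ _
  -- final assembly
  have hchain : (3/2) * (∫ t in (0:ℝ)..1, W t) ≤ Real.sqrt 2 * (R * ‖I‖) := by
    have hWgI : (∫ t in (0:ℝ)..1, W t * g t) ≤ I.re + σ * I.im := by
      rw [← hsplitφ]; exact hPQ
    calc (3/2) * (∫ t in (0:ℝ)..1, W t) ≤ R * ∫ t in (0:ℝ)..1, W t * g t := hMain
      _ ≤ R * (I.re + σ * I.im) := mul_le_mul_of_nonneg_left hWgI hR0.le
      _ ≤ R * (Real.sqrt 2 * ‖I‖) := mul_le_mul_of_nonneg_left hIabs hR0.le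
      _ = Real.sqrt 2 * (R * ‖I‖) := by ring
  have hfin : (∫ t in (0:ℝ)..1, W t) < R * ‖I‖ :=
    lt_of_sqrt_two_bound hBpos (by positivity) hchain
  show 1 < ‖((betaFun c (1 + β) : ℝ) : ℂ)⁻¹ * (z * I)‖
  rw [norm_mul, norm_inv, Complex.norm_real, Real.norm_eq_abs, norm_mul, hBeq,
    abs_of_pos hBpos, ← hR]
  rw [show (∫ t in (0:ℝ)..1, W t)⁻¹ * (R * ‖I‖)
      = (R * ‖I‖) / (∫ t in (0:ℝ)..1, W t) by ring]
  exact (one_lt_div hBpos).mpr hfin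
end
end

section
/- Let K ≥ 1 be a constant for which Grothendieck's inequality holds: for all m, n, ℓ ∈ ℕ, every real m×n matrix B, and all unit vectors u¹,…,u^m, v¹,…,vⁿ ∈ ℝ^ℓ, Σ_{ij} B_{ij}⟨uⁱ,vʲ⟩ ≤ K · max_{ε∈{±1}^m, δ∈{±1}^n} Σ_{ij} B_{ij}·εᵢ·δⱼ. Let N_X be a norm on ℝⁿ and N a norm on ℝ^m, each invariant under entrywise sign changes and each exactly 2-convex, i.e. for every finite sequence of vectors (x^i), N(( (Σᵢ (x^i_j)² )^{1/2} )_j) ≤ (Σᵢ N(x^i)²)^{1/2}. Then for every real m×n matrix A, every ℓ, and all vectors u¹,…,u^m, v¹,…,vⁿ ∈ ℝ^ℓ with N((‖uⁱ‖₂)_{i}) ≤ 1 and N_X((‖vʲ‖₂)_{j}) ≤ 1: Σ_{ij} A_{ij}·⟨uⁱ,vʲ⟩ ≤ K · sup{ yᵀA x : y ∈ ℝ^m, x ∈ ℝⁿ, N(y) ≤ 1, N_X(x) ≤ 1 }. -/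
noncomputable section

open Real Set

lemma myNorm_zero {d : ℕ} (N : (Fin d → ℝ) → ℝ)
    (hsmul : ∀ (c : ℝ) x, N (c • x) = |c| * N x) : N 0 = 0 := by
  have := hsmul 0 0
  simpa using this

lemma myNorm_nonneg {d : ℕ} (N : (Fin d → ℝ) → ℝ)
    (htri : ∀ x y, N (x + y) ≤ N x + N y)
    (hsmul : ∀ (c : ℝ) x, N (c • x) = |c| * N x) (x : Fin d → ℝ) : 0 ≤ N x := by
  have h0 : N 0 = 0 := myNorm_zero N hsmul
  have h1 := htri x ((-1 : ℝ) • x)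
  have h2 : N ((-1 : ℝ) • x) = N x := by rw [hsmul]; simp
  have h3 : x + (-1 : ℝ) • x = 0 := by simp
  rw [h3, h0, h2] at h1
  linarith

lemma myNorm_coord {d : ℕ} (N : (Fin d → ℝ) → ℝ)
    (htri : ∀ x y, N (x + y) ≤ N x + N y)
    (hsmul : ∀ (c : ℝ) x, N (c • x) = |c| * N x)
    (hsign : ∀ (x : Fin d → ℝ) (σ : Fin d → ℝ), (∀ i, σ i = 1 ∨ σ i = -1) →
      N (fun i => σ i * x i) = N x)
    (y : Fin d → ℝ) (i : Fin d) :
    |y i| * N (fun j => if j = i then 1 else 0) ≤ N y := by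
  set σ : Fin d → ℝ := fun j => if j = i then 1 else -1 with hσdef
  have hσ : ∀ j, σ j = 1 ∨ σ j = -1 := by
    intro j; by_cases h : j = i <;> simp [hσdef, h]
  have heq : N (fun j => σ j * y j) = N y := hsign y σ hσ
  have key : (y i • fun j => if j = i then (1:ℝ) else 0)
      = (1/2 : ℝ) • (y + fun j => σ j * y j) := by
    funext j
    by_cases h : j = i <;> simp [hσdef, h, Pi.smul_apply, Pi.add_apply] <;> ring
  have h1 : N (y i • fun j => if j = i then (1:ℝ) else 0) ≤ N y := by
    rw [key, hsmul]
    have := htri y (fun j => σ j * y j)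
    rw [heq] at this
    rw [abs_of_pos (by norm_num : (0:ℝ) < 1/2)]
    linarith
  rwa [hsmul] at h1

lemma myNorm_coord_pos {d : ℕ} (N : (Fin d → ℝ) → ℝ)
    (htri : ∀ x y, N (x + y) ≤ N x + N y)
    (hsmul : ∀ (c : ℝ) x, N (c • x) = |c| * N x)
    (hdef : ∀ x, N x = 0 → x = 0) (i : Fin d) :
    0 < N (fun j => if j = i then 1 else 0) := by
  rcases lt_or_eq_of_le (myNorm_nonneg N htri hsmul _) with h | h
  · exact h
  · exfalso
    have := hdef _ h.symm
    have := congrFun this i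
    simp at this

theorem grothendieck_bound_on_relaxation (K : ℝ) (hK : 1 ≤ K)
    -- Grothendieck's inequality with constant K:
    (hGroth : ∀ (m n ℓ : ℕ) (B : Matrix (Fin m) (Fin n) ℝ)
        (u : Fin m → Fin ℓ → ℝ) (v : Fin n → Fin ℓ → ℝ),
      (∀ i, Real.sqrt (∑ t, u i t ^ 2) = 1) → (∀ j, Real.sqrt (∑ t, v j t ^ 2) = 1) →
      ∃ (ε : Fin m → ℝ) (δ : Fin n → ℝ),
        (∀ i, ε i = 1 ∨ ε i = -1) ∧ (∀ j, δ j = 1 ∨ δ j = -1) ∧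
        (∑ i, ∑ j, B i j * (∑ t, u i t * v j t)) ≤ K * ∑ i, ∑ j, B i j * ε i * δ j)
    (m n : ℕ) (N : (Fin m → ℝ) → ℝ) (NX : (Fin n → ℝ) → ℝ)
    -- N is a norm on ℝ^m:
    (hN_tri : ∀ x y, N (x + y) ≤ N x + N y)
    (hN_smul : ∀ (c : ℝ) x, N (c • x) = |c| * N x)
    (hN_def : ∀ x, N x = 0 → x = 0)
    -- NX is a norm on ℝ^n:
    (hNX_tri : ∀ x y, NX (x + y) ≤ NX x + NX y)
    (hNX_smul : ∀ (c : ℝ) x, NX (c • x) = |c| * NX x)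
    (hNX_def : ∀ x, NX x = 0 → x = 0)
    -- sign-invariance:
    (hN_sign : ∀ (x : Fin m → ℝ) (σ : Fin m → ℝ), (∀ i, σ i = 1 ∨ σ i = -1) →
      N (fun i => σ i * x i) = N x)
    (hNX_sign : ∀ (x : Fin n → ℝ) (σ : Fin n → ℝ), (∀ j, σ j = 1 ∨ σ j = -1) →
      NX (fun j => σ j * x j) = NX x)
    -- exact 2-convexity:
    (hN_conv : ∀ (s : ℕ) (x : Fin s → Fin m → ℝ),
      N (fun j => Real.sqrt (∑ i, x i j ^ 2)) ≤ Real.sqrt (∑ i, N (x i) ^ 2))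
    (hNX_conv : ∀ (s : ℕ) (x : Fin s → Fin n → ℝ),
      NX (fun j => Real.sqrt (∑ i, x i j ^ 2)) ≤ Real.sqrt (∑ i, NX (x i) ^ 2))
    (A : Matrix (Fin m) (Fin n) ℝ) (ℓ : ℕ)
    (u : Fin m → Fin ℓ → ℝ) (v : Fin n → Fin ℓ → ℝ)
    (hu : N (fun i => Real.sqrt (∑ t, u i t ^ 2)) ≤ 1)
    (hv : NX (fun j => Real.sqrt (∑ t, v j t ^ 2)) ≤ 1) :
    (∑ i, ∑ j, A i j * (∑ t, u i t * v j t)) ≤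
      K * sSup {r : ℝ | ∃ (y : Fin m → ℝ) (x : Fin n → ℝ),
        N y ≤ 1 ∧ NX x ≤ 1 ∧ r = ∑ i, ∑ j, A i j * y i * x j} := by
  set S : Set ℝ := {r : ℝ | ∃ (y : Fin m → ℝ) (x : Fin n → ℝ),
        N y ≤ 1 ∧ NX x ≤ 1 ∧ r = ∑ i, ∑ j, A i j * y i * x j} with hS
  have hK0 : (0:ℝ) ≤ K := le_trans zero_le_one hK
  -- boundedness of S
  have hBdd : BddAbove S := by
    refine ⟨∑ i, ∑ j, |A i j| * (N (fun k => if k = i then 1 else 0))⁻¹ *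
      (NX (fun k => if k = j then 1 else 0))⁻¹, ?_⟩
    rintro r ⟨y, x, hy, hx, rfl⟩
    have hyb : ∀ i, |y i| ≤ (N (fun k => if k = i then 1 else 0))⁻¹ := by
      intro i
      have hpos := myNorm_coord_pos N hN_tri hN_smul hN_def i
      have := myNorm_coord N hN_tri hN_smul hN_sign y i
      rw [← one_div]
      rw [le_div_iff₀ hpos]
      exact le_trans this hy
    have hxb : ∀ j, |x j| ≤ (NX (fun k => if k = j then 1 else 0))⁻¹ := by
      intro j
      have hpos := myNorm_coord_pos NX hNX_tri hNX_smul hNX_def j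
      have := myNorm_coord NX hNX_tri hNX_smul hNX_sign x j
      rw [← one_div, le_div_iff₀ hpos]
      exact le_trans this hx
    refine Finset.sum_le_sum fun i _ => Finset.sum_le_sum fun j _ => ?_
    have h1 : A i j * y i * x j ≤ |A i j| * |y i| * |x j| := by
      calc A i j * y i * x j ≤ |A i j * y i * x j| := le_abs_self _
        _ = |A i j| * |y i| * |x j| := by rw [abs_mul, abs_mul]
    refine h1.trans ?_
    have hNe := (myNorm_coord_pos N hN_tri hN_smul hN_def i)
    have hNf := (myNorm_coord_pos NX hNX_tri hNX_smul hNX_def j)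
    have hNe' : (0:ℝ) ≤ (N fun k => if k = i then 1 else 0)⁻¹ := by positivity
    exact mul_le_mul (mul_le_mul_of_nonneg_left (hyb i) (abs_nonneg (A i j)))
      (hxb j) (abs_nonneg _) (by positivity)
  -- S is nonempty / contains 0
  have h0S : (0:ℝ) ∈ S := by
    refine ⟨0, 0, ?_, ?_, ?_⟩
    · rw [myNorm_zero N hN_smul]; norm_num
    · rw [myNorm_zero NX hNX_smul]; norm_num
    · simp
  rcases Nat.eq_zero_or_pos ℓ with hℓ | hℓ
  · subst hℓ
    have hz : (∑ i, ∑ j, A i j * (∑ t : Fin 0, u i t * v j t)) = 0 := by simp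
    rw [hz]
    exact mul_nonneg hK0 (le_csSup hBdd h0S)
  · set a : Fin m → ℝ := fun i => Real.sqrt (∑ t, u i t ^ 2) with ha
    set b : Fin n → ℝ := fun j => Real.sqrt (∑ t, v j t ^ 2) with hb
    have ha0 : ∀ i, a i = 0 → ∀ t, u i t = 0 := by
      intro i h t
      have hs : (0:ℝ) ≤ ∑ t, u i t ^ 2 := Finset.sum_nonneg fun t _ => sq_nonneg _
      have h1 : (∑ t, u i t ^ 2) = 0 := le_antisymm (Real.sqrt_eq_zero'.mp h) hs
      have := (Finset.sum_eq_zero_iff_of_nonneg (fun t _ => sq_nonneg (u i t))).mp h1 t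
        (Finset.mem_univ t)
      exact pow_eq_zero_iff (by norm_num) |>.mp this
    have hb0 : ∀ j, b j = 0 → ∀ t, v j t = 0 := by
      intro j h t
      have hs : (0:ℝ) ≤ ∑ t, v j t ^ 2 := Finset.sum_nonneg fun t _ => sq_nonneg _
      have h1 : (∑ t, v j t ^ 2) = 0 := le_antisymm (Real.sqrt_eq_zero'.mp h) hs
      have := (Finset.sum_eq_zero_iff_of_nonneg (fun t _ => sq_nonneg (v j t))).mp h1 t
        (Finset.mem_univ t)
      exact pow_eq_zero_iff (by norm_num) |>.mp this
    set i0 : Fin ℓ := ⟨0, hℓ⟩ with hi0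
    set e0 : Fin ℓ → ℝ := fun t => if t = i0 then 1 else 0 with he0
    have he0norm : Real.sqrt (∑ t, e0 t ^ 2) = 1 := by
      have h1 : (∑ t, e0 t ^ 2) = 1 := by
        simp [he0, sq, ite_mul, Finset.sum_ite_eq']
      rw [h1, Real.sqrt_one]
    set uh : Fin m → Fin ℓ → ℝ := fun i => if a i = 0 then e0 else (a i)⁻¹ • u i with huh
    set vh : Fin n → Fin ℓ → ℝ := fun j => if b j = 0 then e0 else (b j)⁻¹ • v j with hvh
    have huhn : ∀ i, Real.sqrt (∑ t, uh i t ^ 2) = 1 := by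
      intro i
      by_cases h : a i = 0
      · simp only [huh, if_pos h]; exact he0norm
      · have hs : (0:ℝ) ≤ ∑ t, u i t ^ 2 := Finset.sum_nonneg fun t _ => sq_nonneg _
        have h2 : a i ^ 2 = ∑ t, u i t ^ 2 := Real.sq_sqrt hs
        have h3 : (∑ t, ((a i)⁻¹ • u i) t ^ 2) = (a i)⁻¹ ^ 2 * ∑ t, u i t ^ 2 := by
          rw [Finset.mul_sum]
          exact Finset.sum_congr rfl fun t _ => by simp [mul_pow]
        simp only [huh, if_neg h, h3, ← h2]
        rw [show (a i)⁻¹ ^ 2 * a i ^ 2 = 1 by field_simp, Real.sqrt_one]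
    have hvhn : ∀ j, Real.sqrt (∑ t, vh j t ^ 2) = 1 := by
      intro j
      by_cases h : b j = 0
      · simp only [hvh, if_pos h]; exact he0norm
      · have hs : (0:ℝ) ≤ ∑ t, v j t ^ 2 := Finset.sum_nonneg fun t _ => sq_nonneg _
        have h2 : b j ^ 2 = ∑ t, v j t ^ 2 := Real.sq_sqrt hs
        have h3 : (∑ t, ((b j)⁻¹ • v j) t ^ 2) = (b j)⁻¹ ^ 2 * ∑ t, v j t ^ 2 := by
          rw [Finset.mul_sum]
          exact Finset.sum_congr rfl fun t _ => by simp [mul_pow]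
        simp only [hvh, if_neg h, h3, ← h2]
        rw [show (b j)⁻¹ ^ 2 * b j ^ 2 = 1 by field_simp, Real.sqrt_one]
    set B : Matrix (Fin m) (Fin n) ℝ := Matrix.of (fun i j => A i j * a i * b j) with hB
    obtain ⟨ε, δ, hε, hδ, hineq⟩ := hGroth m n ℓ B uh vh huhn hvhn
    have hLHS : (∑ i, ∑ j, A i j * (∑ t, u i t * v j t))
        = ∑ i, ∑ j, B i j * (∑ t, uh i t * vh j t) := by
      refine Finset.sum_congr rfl fun i _ => Finset.sum_congr rfl fun j _ => ?_
      by_cases hai : a i = 0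
      · have h1 : ∀ t, u i t = 0 := ha0 i hai
        simp [hB, hai, h1]
      · by_cases hbj : b j = 0
        · have h1 : ∀ t, v j t = 0 := hb0 j hbj
          simp [hB, hbj, h1]
        · have h1 : (∑ t, uh i t * vh j t) = (a i)⁻¹ * (b j)⁻¹ * ∑ t, u i t * v j t := by
            rw [Finset.mul_sum]
            refine Finset.sum_congr rfl fun t _ => ?_
            simp only [huh, hvh, if_neg hai, if_neg hbj, Pi.smul_apply, smul_eq_mul]
            ring
          rw [h1]
          simp only [hB, Matrix.of_apply]
          field_simp
    set y : Fin m → ℝ := fun i => ε i * a i with hy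
    set x : Fin n → ℝ := fun j => δ j * b j with hx
    have hNy : N y ≤ 1 := by rw [hy, hN_sign a ε hε]; exact hu
    have hNx : NX x ≤ 1 := by rw [hx, hNX_sign b δ hδ]; exact hv
    have hrS : (∑ i, ∑ j, B i j * ε i * δ j) ∈ S := by
      refine ⟨y, x, hNy, hNx, ?_⟩
      refine Finset.sum_congr rfl fun i _ => Finset.sum_congr rfl fun j _ => ?_
      simp only [hB, Matrix.of_apply, hy, hx]
      ring
    calc (∑ i, ∑ j, A i j * (∑ t, u i t * v j t))
        = ∑ i, ∑ j, B i j * (∑ t, uh i t * vh j t) := hLHS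
      _ ≤ K * ∑ i, ∑ j, B i j * ε i * δ j := hineq
      _ ≤ K * sSup S := mul_le_mul_of_nonneg_left (le_csSup hBdd hrS) hK0
end
end
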